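/- The commutator subgroup of W₁ equals the subgroup generated by {z, α₁, α₂, α₃, α₄}, and the center of W₁ equals the subgroup generated by {α^p, α₁, α₂, α₃, α₄}. -/

import Mathlib

/-- The commutator convention used in the paper: `[a, b] = a⁻¹ * b⁻¹ * a * b`. -/
def pcomm {G : Type*} [Group G] (a b : G) : G := a⁻¹ * b⁻¹ * a * b

namespace W1Aux
variable {G : Type*} [Group G]

theorem pcomm_eq_one {a b : G} (h : a * b = b * a) : pcomm a b = 1 := by
  simp only [pcomm, mul_assoc]; rw [h]; group

theorem comm_of_pcomm {a b : G} (h : pcomm a b = 1) : a * b = b * a := by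
  have h2 : b * a * (a⁻¹ * b⁻¹ * a * b) = a * b := by group
  rw [show a⁻¹ * b⁻¹ * a * b = pcomm a b from rfl, h, mul_one] at h2
  exact h2.symm

theorem pcomm_rev (a b : G) : pcomm b a = (pcomm a b)⁻¹ := by unfold pcomm; group

theorem mul_eq_of_pcomm {a b c : G} (h : pcomm a b = c) : a * b = b * a * c := by
  subst h; unfold pcomm; group

theorem map_pcomm {H : Type*} [Group H] (f : G →* H) (a b : G) :
    f (pcomm a b) = pcomm (f a) (f b) := by simp [pcomm]

theorem ppow_mod {g : G} {p : ℕ} (hg : g ^ p = 1) (m : ℕ) : g ^ m = g ^ (m % p) := by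
  conv_lhs => rw [← Nat.div_add_mod m p]
  rw [pow_add, pow_mul, hg, one_pow, one_mul]

theorem ppow_eq {g : G} {p : ℕ} (hg : g ^ p = 1) {m n : ℕ} (h : m % p = n % p) :
    g ^ m = g ^ n := by rw [ppow_mod hg m, ppow_mod hg n, h]

theorem ppow_inv {g : G} {p : ℕ} (hp : 0 < p) (hg : g ^ p = 1) (n : ℕ) :
    (g ^ n)⁻¹ = g ^ (n * (p - 1)) := by
  have e : n * (p - 1) + n = n * p := by
    calc n * (p - 1) + n = n * ((p - 1) + 1) := by ring
    _ = n * p := by rw [Nat.sub_add_cancel hp]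
  exact inv_eq_of_mul_eq_one_left (by rw [← pow_add, e, mul_comm n p, pow_mul, hg, one_pow])

theorem zpow_red {g : G} {p : ℕ} (hp : 0 < p) (hg : g ^ p = 1) (n : ℤ) :
    ∃ m : ZMod p, g ^ n = g ^ (m.val) := by
  refine ⟨(((n % (p : ℤ)).toNat : ℕ) : ZMod p), ?_⟩
  have h0 : (0:ℤ) ≤ n % p := Int.emod_nonneg n (by exact_mod_cast hp.ne')
  have h1 : g ^ n = g ^ ((n % (p:ℤ)).toNat) := by
    have h2 : g ^ n = g ^ (n % (p:ℤ)) := by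
      conv_lhs => rw [← Int.emod_add_mul_ediv n p]
      rw [zpow_add, zpow_mul, zpow_natCast, hg, one_zpow, mul_one]
    rw [h2, ← zpow_natCast, Int.toNat_of_nonneg h0]
  rw [h1]
  exact ppow_eq hg (by rw [ZMod.val_natCast, Nat.mod_mod_of_dvd _ dvd_rfl])

theorem central_of_gens {S : Set G} (hS : Subgroup.closure S = ⊤) {c : G}
    (h : ∀ g ∈ S, c * g = g * c) : c ∈ Subgroup.center G := by
  rw [Subgroup.mem_center_iff]
  intro g
  have hg : g ∈ Subgroup.closure S := by rw [hS]; exact Subgroup.mem_top g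
  induction hg using Subgroup.closure_induction with
  | mem u hu => exact (h u hu).symm
  | one => simp
  | mul u v _ _ hu hv => rw [mul_assoc, hv, ← mul_assoc, hu, mul_assoc]
  | inv u _ hu => exact (Commute.inv_left (hu : Commute u c) : _)

theorem comm_of_gens {S : Set G} (hS : Subgroup.closure S = ⊤)
    (h : ∀ a ∈ S, ∀ b ∈ S, a * b = b * a) : ∀ u v : G, u * v = v * u := by
  have hle : (⊤ : Subgroup G) ≤ Subgroup.center G := by
    rw [← hS]
    exact (Subgroup.closure_le _).2 (fun a ha => central_of_gens hS (h a ha))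
  intro u v
  exact Subgroup.mem_center_iff.1 (hle (Subgroup.mem_top v)) u

theorem normal_of_le_center {H : Subgroup G} (h : H ≤ Subgroup.center G) : H.Normal := by
  constructor
  intro n hn g
  rw [Subgroup.mem_center_iff.1 (h hn) g, mul_inv_cancel_right]
  exact hn

theorem conj_central_left {c : G} (hc : c ∈ Subgroup.center G) (u : G) : u * c * u⁻¹ = c := by
  rw [Subgroup.mem_center_iff.1 hc u, mul_inv_cancel_right]

theorem conj_central_right {c : G} (hc : c ∈ Subgroup.center G) (u : G) : u⁻¹ * c * u = c := by
  rw [Subgroup.mem_center_iff.1 hc u⁻¹, inv_mul_cancel_right]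

theorem conj_by_central_left {c : G} (hc : c ∈ Subgroup.center G) (w : G) : c * w * c⁻¹ = w := by
  rw [show c * w = w * c from (Subgroup.mem_center_iff.1 hc w).symm, mul_inv_cancel_right]

theorem conj_by_central_right {c : G} (hc : c ∈ Subgroup.center G) (w : G) : c⁻¹ * w * c = w := by
  rw [mul_assoc, show w * c = c * w from Subgroup.mem_center_iff.1 hc w, inv_mul_cancel_left]

theorem conj_pow_aux (g h : G) (n : ℕ) : g⁻¹ * h ^ n * g = (g⁻¹ * h * g) ^ n := by
  induction n with
  | zero => simp
  | succ n ih =>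
    have e : g⁻¹ * h ^ (n+1) * g = (g⁻¹ * h ^ n * g) * (g⁻¹ * h * g) := by
      rw [pow_succ]; simp [mul_assoc]
    rw [e, ih, ← pow_succ]

theorem aux_comm {X Y Z : G} (hXY : X * Y = Y * X * Z) (hZX : Z * X = X * Z) :
    ∀ a : ℕ, X ^ a * Y = Y * X ^ a * Z ^ a := by
  intro a; induction a with
  | zero => simp
  | succ a ih =>
    have hZXa : Z * X ^ a = X ^ a * Z := Commute.pow_right hZX a
    calc X ^ (a+1) * Y = X * (X ^ a * Y) := by rw [pow_succ']; rw [mul_assoc]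
    _ = X * (Y * X ^ a * Z ^ a) := by rw [ih]
    _ = (X * Y) * (X ^ a * Z ^ a) := by simp [mul_assoc]
    _ = (Y * X * Z) * (X ^ a * Z ^ a) := by rw [hXY]
    _ = Y * X * ((Z * X ^ a) * Z ^ a) := by simp [mul_assoc]
    _ = Y * X * ((X ^ a * Z) * Z ^ a) := by rw [hZXa]
    _ = Y * (X * X ^ a) * (Z * Z ^ a) := by simp [mul_assoc]
    _ = Y * X ^ (a+1) * Z ^ (a+1) := by rw [← pow_succ', ← pow_succ']

theorem prod_pow_mul {a b : G} (h : Commute a b) (i j i' j' : ℕ) :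
    (a ^ i * b ^ j) * (a ^ i' * b ^ j') = a ^ (i+i') * b ^ (j+j') := by
  have hsw : b ^ j * a ^ i' = a ^ i' * b ^ j := (h.symm.pow_pow j i' : _)
  rw [pow_add, pow_add]
  calc a^i * b^j * (a^i' * b^j') = a^i * ((b^j * a^i') * b^j') := by simp [mul_assoc]
  _ = a^i * ((a^i' * b^j) * b^j') := by rw [hsw]
  _ = a^i * a^i' * (b^j * b^j') := by simp [mul_assoc]

theorem prod_pow_inv {a b : G} {p : ℕ} (hp : 0 < p) (h : Commute a b)
    (ha : a ^ p = 1) (hb : b ^ p = 1) (i j : ℕ) :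
    (a ^ i * b ^ j)⁻¹ = a ^ (i*(p-1)) * b ^ (j*(p-1)) := by
  rw [mul_inv_rev, ppow_inv hp ha, ppow_inv hp hb]
  exact ((h.symm.pow_pow (j*(p-1)) (i*(p-1))) : _)

theorem mem_normalizer_of_conj {H : Subgroup G} {S : Set G} (hH : H = Subgroup.closure S) {g : G}
    (h1 : ∀ s ∈ S, g * s * g⁻¹ ∈ H) (h2 : ∀ s ∈ S, g⁻¹ * s * g ∈ H) : g ∈ Subgroup.normalizer (H : Set G) := by
  have key : ∀ (u : G), (∀ s ∈ S, u * s * u⁻¹ ∈ H) → ∀ h ∈ H, u * h * u⁻¹ ∈ H := by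
    intro u hu h hh
    rw [hH] at hh
    induction hh using Subgroup.closure_induction with
    | mem s hs => exact hu s hs
    | one => simpa using one_mem H
    | mul a b _ _ ha hb =>
      have e : u*(a*b)*u⁻¹ = (u*a*u⁻¹)*(u*b*u⁻¹) := by group
      rw [e]; exact mul_mem ha hb
    | inv a _ ha =>
      have e : u*a⁻¹*u⁻¹ = (u*a*u⁻¹)⁻¹ := by group
      rw [e]; exact inv_mem ha
  rw [Subgroup.mem_normalizer_iff]
  intro h
  constructor
  · exact fun hh => key g h1 h hh
  · intro hh
    have h3 := key g⁻¹ (by simpa using h2) _ hh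
    simpa [mul_assoc] using h3

end W1Aux

/-- `IsW1 p W x y z α a₁ a₂ a₃ a₄` says that `W` is (a copy of) the finite group `W₁`
of order `p ^ 9` with presentation on generators `x, y, z, α, α₁, α₂, α₃, α₄` and relations
`[x,y] = z`, `[x,z] = α₁`, `[y,z] = α₂`, `[x,α] = α₃`, `[y,α] = α₄`, `[z,α] = 1`,
`x^p = y^p = z^p = α₁^p = α₂^p = α₃^p = α₄^p = 1`, `α^(p²) = 1`, and
`α₁, α₂, α₃, α₄` commute with all generators. -/
def IsW1 (p : ℕ) (W : Type*) [Group W] (x y z α a₁ a₂ a₃ a₄ : W) : Prop :=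
  Subgroup.closure {x, y, z, α, a₁, a₂, a₃, a₄} = ⊤ ∧
  Nat.card W = p ^ 9 ∧
  pcomm x y = z ∧ pcomm x z = a₁ ∧ pcomm y z = a₂ ∧
  pcomm x α = a₃ ∧ pcomm y α = a₄ ∧ pcomm z α = 1 ∧
  x ^ p = 1 ∧ y ^ p = 1 ∧ z ^ p = 1 ∧
  a₁ ^ p = 1 ∧ a₂ ^ p = 1 ∧ a₃ ^ p = 1 ∧ a₄ ^ p = 1 ∧ α ^ p ^ 2 = 1 ∧
  ∀ c ∈ ({a₁, a₂, a₃, a₄} : Set W), ∀ g ∈ ({x, y, z, α, a₁, a₂, a₃, a₄} : Set W),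
    c * g = g * c


open scoped commutatorElement in
open W1Aux Subgroup in
set_option maxHeartbeats 3000000 in
/-- The commutator subgroup of `W₁` is generated by `{z, α₁, α₂, α₃, α₄}` and the center of
`W₁` is generated by `{α^p, α₁, α₂, α₃, α₄}`. -/
theorem stmt_10 (p : ℕ) (hp : p.Prime) (hodd : Odd p)
    (W : Type) [Group W] (x y z α a₁ a₂ a₃ a₄ : W)
    (hW : IsW1 p W x y z α a₁ a₂ a₃ a₄) :
    commutator W = Subgroup.closure {z, a₁, a₂, a₃, a₄} ∧
    Subgroup.center W = Subgroup.closure {α ^ p, a₁, a₂, a₃, a₄} := by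
  obtain ⟨hgen, hcard, hrz, hr1, hr2, hr3, hr4, hr5, hxp, hyp, hzp, h1p, h2p, h3p, h4p, hap,
    hcomm⟩ := hW
  have ppos : 0 < p := hp.pos
  haveI : NeZero p := ⟨hp.ne_zero⟩
  haveI : Finite W := Nat.finite_of_card_ne_zero (by rw [hcard]; positivity)
  -- central generators
  have hc1 : a₁ ∈ center W := central_of_gens hgen (fun g hg => hcomm a₁ (by simp) g hg)
  have hc2 : a₂ ∈ center W := central_of_gens hgen (fun g hg => hcomm a₂ (by simp) g hg)
  have hc3 : a₃ ∈ center W := central_of_gens hgen (fun g hg => hcomm a₃ (by simp) g hg)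
  have hc4 : a₄ ∈ center W := central_of_gens hgen (fun g hg => hcomm a₄ (by simp) g hg)
  -- conjugation relations
  have hxz : x⁻¹ * z * x = z * a₁⁻¹ := by rw [← hr1]; unfold pcomm; group
  have hyz : y⁻¹ * z * y = z * a₂⁻¹ := by rw [← hr2]; unfold pcomm; group
  have hxa : x⁻¹ * α * x = α * a₃⁻¹ := by rw [← hr3]; unfold pcomm; group
  have hya : y⁻¹ * α * y = α * a₄⁻¹ := by rw [← hr4]; unfold pcomm; group
  have hza : z * α = α * z := comm_of_pcomm hr5
  -- α ^ p is central
  have hc5 : α ^ p ∈ center W := by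
    apply central_of_gens hgen
    intro g hg
    have key : ∀ u v c : W, c ∈ center W → c ^ p = 1 → u⁻¹ * v * u = v * c⁻¹ →
        α ^ p * u = u * α ^ p → False ∨ True := fun _ _ _ _ _ _ _ => Or.inr trivial
    clear key
    have hx' : α ^ p * x = x * α ^ p := by
      have e : x⁻¹ * α ^ p * x = α ^ p := by
        rw [conj_pow_aux, hxa,
          Commute.mul_pow (Commute.inv_right (Subgroup.mem_center_iff.1 hc3 α : Commute α a₃)),
          inv_pow, h3p, inv_one, mul_one]
      calc α ^ p * x = x * (x⁻¹ * α ^ p * x) := by simp [mul_assoc]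
      _ = x * α ^ p := by rw [e]
    have hy' : α ^ p * y = y * α ^ p := by
      have e : y⁻¹ * α ^ p * y = α ^ p := by
        rw [conj_pow_aux, hya,
          Commute.mul_pow (Commute.inv_right (Subgroup.mem_center_iff.1 hc4 α : Commute α a₄)),
          inv_pow, h4p, inv_one, mul_one]
      calc α ^ p * y = y * (y⁻¹ * α ^ p * y) := by simp [mul_assoc]
      _ = y * α ^ p := by rw [e]
    simp only [Set.mem_insert_iff, Set.mem_singleton_iff] at hg
    rcases hg with rfl|rfl|rfl|rfl|rfl|rfl|rfl|rfl
    · exact hx'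
    · exact hy'
    · exact (Commute.pow_left (hza.symm : Commute α g) p : _)
    · exact (Commute.pow_left (Commute.refl g) p : _)
    · exact (Commute.pow_left ((hcomm g (by simp) α (by simp)).symm : Commute α g) p : _)
    · exact (Commute.pow_left ((hcomm g (by simp) α (by simp)).symm : Commute α g) p : _)
    · exact (Commute.pow_left ((hcomm g (by simp) α (by simp)).symm : Commute α g) p : _)
    · exact (Commute.pow_left ((hcomm g (by simp) α (by simp)).symm : Commute α g) p : _)
  -- more conj facts for normality
  have hxz' : x * z * x⁻¹ = z * a₁ := by
    have h' : x * a₁ * x⁻¹ = a₁ := conj_central_left hc1 x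
    calc x * z * x⁻¹ = z * (x * a₁ * x⁻¹) := by rw [← hr1]; unfold pcomm; group
    _ = z * a₁ := by rw [h']
  have hyz' : y * z * y⁻¹ = z * a₂ := by
    have h' : y * a₂ * y⁻¹ = a₂ := conj_central_left hc2 y
    calc y * z * y⁻¹ = z * (y * a₂ * y⁻¹) := by rw [← hr2]; unfold pcomm; group
    _ = z * a₂ := by rw [h']
  have hαz1 : α * z * α⁻¹ = z := by rw [← hza, mul_inv_cancel_right]
  have hαz2 : α⁻¹ * z * α = z := by rw [mul_assoc, hza, inv_mul_cancel_left]
  set N : Subgroup W := Subgroup.closure ({z, a₁, a₂, a₃, a₄} : Set W) with hN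
  have hNz : z ∈ N := subset_closure (by simp)
  have hNa1 : a₁ ∈ N := subset_closure (by simp)
  have hNa2 : a₂ ∈ N := subset_closure (by simp)
  have hNa3 : a₃ ∈ N := subset_closure (by simp)
  have hNa4 : a₄ ∈ N := subset_closure (by simp)
  have hNnormal : N.Normal := by
    rw [← Subgroup.normalizer_eq_top_iff]
    apply le_antisymm le_top
    rw [← hgen]
    refine (Subgroup.closure_le _).2 ?_
    intro g hg
    simp only [Set.mem_insert_iff, Set.mem_singleton_iff] at hg
    refine mem_normalizer_of_conj hN ?_ ?_ <;>
      (intro s hs; simp only [Set.mem_insert_iff, Set.mem_singleton_iff] at hs) <;>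
      rcases hg with rfl|rfl|rfl|rfl|rfl|rfl|rfl|rfl <;>
      rcases hs with rfl|rfl|rfl|rfl|rfl <;>
      first
        | (rw [conj_central_left hc1 _]; exact hNa1)
        | (rw [conj_central_left hc2 _]; exact hNa2)
        | (rw [conj_central_left hc3 _]; exact hNa3)
        | (rw [conj_central_left hc4 _]; exact hNa4)
        | (rw [conj_central_right hc1 _]; exact hNa1)
        | (rw [conj_central_right hc2 _]; exact hNa2)
        | (rw [conj_central_right hc3 _]; exact hNa3)
        | (rw [conj_central_right hc4 _]; exact hNa4)
        | (rw [hxz']; exact mul_mem hNz hNa1)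
        | (rw [hxz]; exact mul_mem hNz (inv_mem hNa1))
        | (rw [hyz']; exact mul_mem hNz hNa2)
        | (rw [hyz]; exact mul_mem hNz (inv_mem hNa2))
        | (rw [hαz1]; exact hNz)
        | (rw [hαz2]; exact hNz)
        | (rw [conj_by_central_left hc1 _]; exact hNz)
        | (rw [conj_by_central_left hc2 _]; exact hNz)
        | (rw [conj_by_central_left hc3 _]; exact hNz)
        | (rw [conj_by_central_left hc4 _]; exact hNz)
        | (rw [conj_by_central_right hc1 _]; exact hNz)
        | (rw [conj_by_central_right hc2 _]; exact hNz)
        | (rw [conj_by_central_right hc3 _]; exact hNz)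
        | (rw [conj_by_central_right hc4 _]; exact hNz)
        | (rw [mul_inv_cancel_right]; exact hNz)
        | (rw [mul_assoc, inv_mul_cancel_left]; exact hNz)
  haveI := hNnormal
  have hpart1 : commutator W = N := by
    apply le_antisymm
    · -- commutator ≤ N :  W/N is abelian
      set π1 : W →* W ⧸ N := QuotientGroup.mk' N with hπ1
      have hker : ∀ w : W, w ∈ N → π1 w = 1 := fun w hw => (QuotientGroup.eq_one_iff w).2 hw
      have hgenQ : Subgroup.closure (π1 '' {x, y, z, α, a₁, a₂, a₃, a₄}) = ⊤ := by
        rw [← MonoidHom.map_closure, hgen]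
        exact Subgroup.map_top_of_surjective π1 (QuotientGroup.mk'_surjective N)
      have hgen3 : Subgroup.closure ({π1 x, π1 y, π1 α} : Set (W ⧸ N)) = ⊤ := by
        apply le_antisymm le_top
        rw [← hgenQ]
        refine (Subgroup.closure_le _).2 ?_
        rintro u ⟨w, hw, rfl⟩
        simp only [Set.mem_insert_iff, Set.mem_singleton_iff] at hw
        rcases hw with rfl|rfl|rfl|rfl|rfl|rfl|rfl|rfl
        · exact subset_closure (by simp)
        · exact subset_closure (by simp)
        · rw [hker w hNz]; exact one_mem _
        · exact subset_closure (by simp)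
        · rw [hker w hNa1]; exact one_mem _
        · rw [hker w hNa2]; exact one_mem _
        · rw [hker w hNa3]; exact one_mem _
        · rw [hker w hNa4]; exact one_mem _
      have cxy : π1 x * π1 y = π1 y * π1 x :=
        comm_of_pcomm (by rw [← map_pcomm, hrz]; exact hker z hNz)
      have cxα : π1 x * π1 α = π1 α * π1 x :=
        comm_of_pcomm (by rw [← map_pcomm, hr3]; exact hker a₃ hNa3)
      have cyα : π1 y * π1 α = π1 α * π1 y :=
        comm_of_pcomm (by rw [← map_pcomm, hr4]; exact hker a₄ hNa4)
      have hab : ∀ u v : W ⧸ N, u * v = v * u := by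
        apply comm_of_gens hgen3
        intro a ha b hb
        simp only [Set.mem_insert_iff, Set.mem_singleton_iff] at ha hb
        rcases ha with rfl|rfl|rfl <;> rcases hb with rfl|rfl|rfl <;>
          first
            | rfl
            | exact cxy
            | exact cxy.symm
            | exact cxα
            | exact cxα.symm
            | exact cyα
            | exact cyα.symm
      rw [_root_.commutator_def]
      refine (Subgroup.commutator_le).2 ?_
      intro g₁ _ g₂ _
      rw [← QuotientGroup.eq_one_iff]
      rw [show ((⁅g₁, g₂⁆ : W) : W ⧸ N) = ⁅π1 g₁, π1 g₂⁆ from map_commutatorElement π1 g₁ g₂]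
      exact commutatorElement_eq_one_iff_commute.2 (hab _ _)
    · -- N ≤ commutator
      refine (Subgroup.closure_le _).2 ?_
      intro s hs
      have hmem : ∀ a b : W, pcomm a b ∈ commutator W := by
        intro a b
        have e : pcomm a b = ⁅a⁻¹, b⁻¹⁆ := by
          rw [commutatorElement_def]; unfold pcomm; group
        rw [_root_.commutator_def, e]
        exact Subgroup.commutator_mem_commutator (mem_top _) (mem_top _)
      simp only [Set.mem_insert_iff, Set.mem_singleton_iff] at hs
      rcases hs with rfl|rfl|rfl|rfl|rfl
      · exact hrz ▸ hmem x y
      · exact hr1 ▸ hmem x z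
      · exact hr2 ▸ hmem y z
      · exact hr3 ▸ hmem x α
      · exact hr4 ▸ hmem y α
    -- ===================== Part 2 : the center =====================
  set A0 : Subgroup W := Subgroup.closure ({α ^ p, a₁, a₂, a₃, a₄} : Set W) with hA0def
  have hA0ap : α ^ p ∈ A0 := subset_closure (by simp)
  have hA0a1 : a₁ ∈ A0 := subset_closure (by simp)
  have hA0a2 : a₂ ∈ A0 := subset_closure (by simp)
  have hA0a3 : a₃ ∈ A0 := subset_closure (by simp)
  have hA0a4 : a₄ ∈ A0 := subset_closure (by simp)
  have hA0le : A0 ≤ center W := by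
    refine (Subgroup.closure_le _).2 ?_
    intro s hs
    simp only [Set.mem_insert_iff, Set.mem_singleton_iff] at hs
    rcases hs with rfl|rfl|rfl|rfl|rfl
    exacts [hc5, hc1, hc2, hc3, hc4]
  haveI hA0n : A0.Normal := normal_of_le_center hA0le
  set π : W →* W ⧸ A0 := QuotientGroup.mk' A0 with hπdef
  have hkerA : ∀ w : W, w ∈ A0 → π w = 1 := fun w hw => (QuotientGroup.eq_one_iff w).2 hw
  -- relations in the quotient
  have hZX : (π z) * (π x) = (π x) * (π z) :=
    (comm_of_pcomm (by rw [← map_pcomm, hr1]; exact hkerA a₁ hA0a1)).symm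
  have hZY : (π z) * (π y) = (π y) * (π z) :=
    (comm_of_pcomm (by rw [← map_pcomm, hr2]; exact hkerA a₂ hA0a2)).symm
  have hAX : (π α) * (π x) = (π x) * (π α) :=
    (comm_of_pcomm (by rw [← map_pcomm, hr3]; exact hkerA a₃ hA0a3)).symm
  have hAY : (π α) * (π y) = (π y) * (π α) :=
    (comm_of_pcomm (by rw [← map_pcomm, hr4]; exact hkerA a₄ hA0a4)).symm
  have hZA : (π z) * (π α) = (π α) * (π z) := comm_of_pcomm (by rw [← map_pcomm, hr5, map_one])
  have hq : (π x) * (π y) = (π y) * (π x) * (π z) := mul_eq_of_pcomm (by rw [← map_pcomm, hrz])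
  have hXp' : (π x) ^ p = 1 := by rw [← map_pow, hxp, map_one]
  have hYp' : (π y) ^ p = 1 := by rw [← map_pow, hyp, map_one]
  have hZp' : (π z) ^ p = 1 := by rw [← map_pow, hzp, map_one]
  have hAp' : (π α) ^ p = 1 := by rw [← map_pow]; exact hkerA _ hA0ap
  have hgenQ : Subgroup.closure (π '' {x, y, z, α, a₁, a₂, a₃, a₄}) = ⊤ := by
    rw [← MonoidHom.map_closure, hgen]
    exact Subgroup.map_top_of_surjective π (QuotientGroup.mk'_surjective A0)
  -- π z and π α are central in the quotient
  have hZcen : (π z) ∈ center (W ⧸ A0) := by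
    apply central_of_gens hgenQ
    rintro g ⟨w, hw, rfl⟩
    simp only [Set.mem_insert_iff, Set.mem_singleton_iff] at hw
    rcases hw with rfl|rfl|rfl|rfl|rfl|rfl|rfl|rfl
    · exact hZX
    · exact hZY
    · rfl
    · exact hZA
    · rw [← map_mul, ← map_mul, hcomm w (by simp) z (by simp)]
    · rw [← map_mul, ← map_mul, hcomm w (by simp) z (by simp)]
    · rw [← map_mul, ← map_mul, hcomm w (by simp) z (by simp)]
    · rw [← map_mul, ← map_mul, hcomm w (by simp) z (by simp)]
  have hAcen : (π α) ∈ center (W ⧸ A0) := by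
    apply central_of_gens hgenQ
    rintro g ⟨w, hw, rfl⟩
    simp only [Set.mem_insert_iff, Set.mem_singleton_iff] at hw
    rcases hw with rfl|rfl|rfl|rfl|rfl|rfl|rfl|rfl
    · exact hAX
    · exact hAY
    · exact hZA.symm
    · rfl
    · rw [← map_mul, ← map_mul, hcomm w (by simp) α (by simp)]
    · rw [← map_mul, ← map_mul, hcomm w (by simp) α (by simp)]
    · rw [← map_mul, ← map_mul, hcomm w (by simp) α (by simp)]
    · rw [← map_mul, ← map_mul, hcomm w (by simp) α (by simp)]
  set Zc : Subgroup (W ⧸ A0) := Subgroup.closure ({π z, π α} : Set (W ⧸ A0)) with hZcdef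
  have hZZc : (π z) ∈ Zc := subset_closure (by simp)
  have hAZc : (π α) ∈ Zc := subset_closure (by simp)
  have hZcle : Zc ≤ center (W ⧸ A0) := by
    refine (Subgroup.closure_le _).2 ?_
    intro s hs
    simp only [Set.mem_insert_iff, Set.mem_singleton_iff] at hs
    rcases hs with rfl|rfl
    exacts [hZcen, hAcen]
  haveI hZcn : Zc.Normal := normal_of_le_center hZcle
  set ρ : (W ⧸ A0) →* (W ⧸ A0) ⧸ Zc := QuotientGroup.mk' Zc with hρdef
  have hkerZ : ∀ w, w ∈ Zc → ρ w = 1 := fun w hw => (QuotientGroup.eq_one_iff w).2 hw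
  set σ : W →* (W ⧸ A0) ⧸ Zc := ρ.comp π with hσdef
  have hσx : σ x = ρ (π x) := rfl
  have hσsurj : Function.Surjective σ := by
    rw [hσdef, MonoidHom.coe_comp]
    exact (QuotientGroup.mk'_surjective Zc).comp (QuotientGroup.mk'_surjective A0)
  have hx2p : (σ x) ^ p = 1 := by rw [← map_pow, hxp, map_one]
  have hy2p : (σ y) ^ p = 1 := by rw [← map_pow, hyp, map_one]
  have hgenQ2' : Subgroup.closure (σ '' {x, y, z, α, a₁, a₂, a₃, a₄}) = ⊤ := by
    rw [← MonoidHom.map_closure, hgen]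
    exact Subgroup.map_top_of_surjective σ hσsurj
  have hgen2 : Subgroup.closure ({σ x, σ y} : Set ((W ⧸ A0) ⧸ Zc)) = ⊤ := by
    apply le_antisymm le_top
    rw [← hgenQ2']
    refine (Subgroup.closure_le _).2 ?_
    rintro u ⟨w, hw, rfl⟩
    simp only [Set.mem_insert_iff, Set.mem_singleton_iff] at hw
    rcases hw with rfl|rfl|rfl|rfl|rfl|rfl|rfl|rfl
    · exact subset_closure (by simp)
    · exact subset_closure (by simp)
    · rw [show σ w = ρ (π w) from rfl, hkerZ _ hZZc]; exact one_mem _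
    · rw [show σ w = ρ (π w) from rfl, hkerZ _ hAZc]; exact one_mem _
    · rw [show σ w = ρ (π w) from rfl, hkerA w hA0a1, map_one]; exact one_mem _
    · rw [show σ w = ρ (π w) from rfl, hkerA w hA0a2, map_one]; exact one_mem _
    · rw [show σ w = ρ (π w) from rfl, hkerA w hA0a3, map_one]; exact one_mem _
    · rw [show σ w = ρ (π w) from rfl, hkerA w hA0a4, map_one]; exact one_mem _
  have cxy2 : Commute (σ x) (σ y) := by
    apply comm_of_pcomm
    rw [← map_pcomm, hrz, show σ z = ρ (π z) from rfl, hkerZ _ hZZc]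
  -- ===== decompositions =====
  have decZc : ∀ w ∈ Zc, ∃ i j : ZMod p, w = (π z) ^ i.val * (π α) ^ j.val := by
    intro w hw
    have hw' : w ∈ Subgroup.closure ({π z, π α} : Set (W ⧸ A0)) := hw
    clear hw
    have hnat : ∃ i j : ℕ, w = (π z) ^ i * (π α) ^ j := by
      induction hw' using Subgroup.closure_induction with
      | mem s hs =>
        simp only [Set.mem_insert_iff, Set.mem_singleton_iff] at hs
        rcases hs with rfl|rfl
        · exact ⟨1, 0, by simp⟩
        · exact ⟨0, 1, by simp⟩
      | one => exact ⟨0, 0, by simp⟩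
      | mul u v _ _ hu hv =>
        obtain ⟨i, j, rfl⟩ := hu; obtain ⟨i', j', rfl⟩ := hv
        exact ⟨i + i', j + j', prod_pow_mul (hZA : Commute (π z) (π α)) i j i' j'⟩
      | inv u _ hu =>
        obtain ⟨i, j, rfl⟩ := hu
        exact ⟨i * (p-1), j * (p-1),
          prod_pow_inv ppos (hZA : Commute (π z) (π α)) hZp' hAp' i j⟩
    obtain ⟨i, j, rfl⟩ := hnat
    refine ⟨(i : ZMod p), (j : ZMod p), ?_⟩
    rw [ppow_eq hZp' (show i % p = ((i : ZMod p)).val % p by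
          rw [ZMod.val_natCast, Nat.mod_mod_of_dvd _ dvd_rfl]),
        ppow_eq hAp' (show j % p = ((j : ZMod p)).val % p by
          rw [ZMod.val_natCast, Nat.mod_mod_of_dvd _ dvd_rfl])]
  have decQ2 : ∀ w : (W ⧸ A0) ⧸ Zc, ∃ i j : ℕ, w = (σ x) ^ i * (σ y) ^ j := by
    intro w
    have hw : w ∈ Subgroup.closure ({σ x, σ y} : Set ((W ⧸ A0) ⧸ Zc)) := by
      rw [hgen2]; exact Subgroup.mem_top w
    induction hw using Subgroup.closure_induction with
    | mem s hs =>
      simp only [Set.mem_insert_iff, Set.mem_singleton_iff] at hs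
      rcases hs with rfl|rfl
      · exact ⟨1, 0, by simp⟩
      · exact ⟨0, 1, by simp⟩
    | one => exact ⟨0, 0, by simp⟩
    | mul u v _ _ hu hv =>
      obtain ⟨i, j, rfl⟩ := hu; obtain ⟨i', j', rfl⟩ := hv
      exact ⟨i + i', j + j', prod_pow_mul cxy2 i j i' j'⟩
    | inv u _ hu =>
      obtain ⟨i, j, rfl⟩ := hu
      exact ⟨i * (p-1), j * (p-1), prod_pow_inv ppos cxy2 hx2p hy2p i j⟩
  -- decomposition of A0 through the commutative group `center W`
  have hαpp : (α ^ p) ^ p = 1 := by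
    rw [← pow_mul, show p * p = p ^ 2 from (pow_two p).symm, hap]
  have decA0 : ∀ w ∈ A0, ∃ i j k l m : ZMod p,
      w = (α^p)^i.val * (a₁^j.val * (a₂^k.val * (a₃^l.val * a₄^m.val))) := by
    intro w hw
    have hmapA0 : A0 = Subgroup.map (center W).subtype
        (Subgroup.closure {(⟨α^p, hc5⟩ : center W), ⟨a₁, hc1⟩, ⟨a₂, hc2⟩, ⟨a₃, hc3⟩,
          ⟨a₄, hc4⟩}) := by
      rw [MonoidHom.map_closure, hA0def]
      congr 1
      simp [Set.image_insert_eq]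
    rw [hmapA0] at hw
    obtain ⟨w', hw', rfl⟩ := Subgroup.mem_map.1 hw
    rw [show ({(⟨α^p, hc5⟩ : center W), ⟨a₁, hc1⟩, ⟨a₂, hc2⟩, ⟨a₃, hc3⟩, ⟨a₄, hc4⟩} :
          Set (center W)) = {⟨α^p, hc5⟩} ∪ ({⟨a₁, hc1⟩} ∪ ({⟨a₂, hc2⟩} ∪ ({⟨a₃, hc3⟩} ∪
          {⟨a₄, hc4⟩}))) from by simp only [Set.insert_eq],
        Subgroup.closure_union, Subgroup.closure_union, Subgroup.closure_union,
        Subgroup.closure_union] at hw'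
    rw [Subgroup.mem_sup_of_normal_right] at hw'
    obtain ⟨u1, hu1, r1, hr1', rfl⟩ := hw'
    rw [Subgroup.mem_sup_of_normal_right] at hr1'
    obtain ⟨u2, hu2, r2, hr2', rfl⟩ := hr1'
    rw [Subgroup.mem_sup_of_normal_right] at hr2'
    obtain ⟨u3, hu3, r3, hr3', rfl⟩ := hr2'
    rw [Subgroup.mem_sup_of_normal_right] at hr3'
    obtain ⟨u4, hu4, u5, hu5, rfl⟩ := hr3'
    rw [Subgroup.mem_closure_singleton] at hu1 hu2 hu3 hu4 hu5
    obtain ⟨n1, rfl⟩ := hu1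
    obtain ⟨n2, rfl⟩ := hu2
    obtain ⟨n3, rfl⟩ := hu3
    obtain ⟨n4, rfl⟩ := hu4
    obtain ⟨n5, rfl⟩ := hu5
    have hcoe : (center W).subtype ((⟨α^p, hc5⟩ : center W) ^ n1 * ((⟨a₁, hc1⟩ : center W) ^ n2 *
        ((⟨a₂, hc2⟩ : center W) ^ n3 * ((⟨a₃, hc3⟩ : center W) ^ n4 *
          (⟨a₄, hc4⟩ : center W) ^ n5)))) =
        (α^p)^n1 * (a₁^n2 * (a₂^n3 * (a₃^n4 * a₄^n5))) := by
      simp [map_mul, map_zpow]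
    obtain ⟨m1, e1⟩ := zpow_red ppos hαpp n1
    obtain ⟨m2, e2⟩ := zpow_red ppos h1p n2
    obtain ⟨m3, e3⟩ := zpow_red ppos h2p n3
    obtain ⟨m4, e4⟩ := zpow_red ppos h3p n4
    obtain ⟨m5, e5⟩ := zpow_red ppos h4p n5
    exact ⟨m1, m2, m3, m4, m5, by rw [hcoe, e1, e2, e3, e4, e5]⟩
  -- ===== counting =====
  let f5 : ZMod p × ZMod p × ZMod p × ZMod p × ZMod p → ↥A0 := fun v =>
    ⟨(α^p)^v.1.val * (a₁^v.2.1.val * (a₂^v.2.2.1.val * (a₃^v.2.2.2.1.val * a₄^v.2.2.2.2.val))),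
     mul_mem (pow_mem hA0ap _) (mul_mem (pow_mem hA0a1 _) (mul_mem (pow_mem hA0a2 _)
       (mul_mem (pow_mem hA0a3 _) (pow_mem hA0a4 _))))⟩
  have hf5surj : Function.Surjective f5 := by
    rintro ⟨w, hw⟩
    obtain ⟨i, j, k, l, m, he⟩ := decA0 w hw
    exact ⟨(i, j, k, l, m), Subtype.ext he.symm⟩
  let ψ2 : ZMod p × ZMod p → ↥Zc := fun v =>
    ⟨(π z) ^ v.1.val * (π α) ^ v.2.val, mul_mem (pow_mem hZZc _) (pow_mem hAZc _)⟩
  have hψ2surj : Function.Surjective ψ2 := by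
    rintro ⟨w, hw⟩
    obtain ⟨i, j, he⟩ := decZc w hw
    exact ⟨(i, j), Subtype.ext he.symm⟩
  let φ2 : ZMod p × ZMod p → (W ⧸ A0) ⧸ Zc := fun v => (σ x) ^ v.1.val * (σ y) ^ v.2.val
  have hφ2surj : Function.Surjective φ2 := by
    intro w
    obtain ⟨i, j, rfl⟩ := decQ2 w
    refine ⟨((i : ZMod p), (j : ZMod p)), ?_⟩
    show (σ x) ^ ((i : ZMod p)).val * (σ y) ^ ((j : ZMod p)).val = (σ x) ^ i * (σ y) ^ j
    rw [ppow_eq hx2p (show ((i : ZMod p)).val % p = i % p by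
          rw [ZMod.val_natCast, Nat.mod_mod_of_dvd _ dvd_rfl]),
        ppow_eq hy2p (show ((j : ZMod p)).val % p = j % p by
          rw [ZMod.val_natCast, Nat.mod_mod_of_dvd _ dvd_rfl])]
  have hT2 : Nat.card (ZMod p × ZMod p) = p ^ 2 := by
    rw [Nat.card_prod, Nat.card_zmod]; ring
  have hT5 : Nat.card (ZMod p × ZMod p × ZMod p × ZMod p × ZMod p) = p ^ 5 := by
    rw [Nat.card_prod, Nat.card_prod, Nat.card_prod, Nat.card_prod]
    simp only [Nat.card_zmod]; ring
  have hcQ2 : Nat.card ((W ⧸ A0) ⧸ Zc) ≤ p ^ 2 := hT2 ▸ Nat.card_le_card_of_surjective _ hφ2surj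
  have hcZc : Nat.card ↥Zc ≤ p ^ 2 := hT2 ▸ Nat.card_le_card_of_surjective _ hψ2surj
  have hcA0 : Nat.card ↥A0 ≤ p ^ 5 := hT5 ▸ Nat.card_le_card_of_surjective _ hf5surj
  have eW : Nat.card W = Nat.card (W ⧸ A0) * Nat.card ↥A0 :=
    Subgroup.card_eq_card_quotient_mul_card_subgroup A0
  have eQ : Nat.card (W ⧸ A0) = Nat.card ((W ⧸ A0) ⧸ Zc) * Nat.card ↥Zc :=
    Subgroup.card_eq_card_quotient_mul_card_subgroup Zc
  have h9 : Nat.card ((W ⧸ A0) ⧸ Zc) * Nat.card ↥Zc * Nat.card ↥A0 = p ^ 9 := by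
    rw [← hcard, eW, eQ]
  have hA0card : Nat.card ↥A0 = p ^ 5 := by
    refine le_antisymm hcA0 ?_
    have h1 : p ^ 4 * p ^ 5 ≤ p ^ 4 * Nat.card ↥A0 := by
      calc p ^ 4 * p ^ 5 = p ^ 9 := by ring
      _ = Nat.card ((W ⧸ A0) ⧸ Zc) * Nat.card ↥Zc * Nat.card ↥A0 := h9.symm
      _ ≤ (p^2 * p^2) * Nat.card ↥A0 := Nat.mul_le_mul_right _ (Nat.mul_le_mul hcQ2 hcZc)
      _ = p ^ 4 * Nat.card ↥A0 := by ring
    exact Nat.le_of_mul_le_mul_left h1 (by positivity)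
  have h4 : Nat.card ((W ⧸ A0) ⧸ Zc) * Nat.card ↥Zc = p ^ 4 := by
    refine Nat.eq_of_mul_eq_mul_right (show 0 < p ^ 5 by positivity) ?_
    calc Nat.card ((W ⧸ A0) ⧸ Zc) * Nat.card ↥Zc * p ^ 5
        = Nat.card ((W ⧸ A0) ⧸ Zc) * Nat.card ↥Zc * Nat.card ↥A0 := by rw [hA0card]
    _ = p ^ 9 := h9
    _ = p ^ 4 * p ^ 5 := by ring
  have hZccard : Nat.card ↥Zc = p ^ 2 := by
    refine le_antisymm hcZc ?_
    have h1 : p ^ 2 * p ^ 2 ≤ p ^ 2 * Nat.card ↥Zc := by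
      calc p ^ 2 * p ^ 2 = p ^ 4 := by ring
      _ = Nat.card ((W ⧸ A0) ⧸ Zc) * Nat.card ↥Zc := h4.symm
      _ ≤ p ^ 2 * Nat.card ↥Zc := Nat.mul_le_mul_right _ hcQ2
    exact Nat.le_of_mul_le_mul_left h1 (by positivity)
  have hψ2bij : Function.Bijective ψ2 :=
    (Nat.bijective_iff_surjective_and_card ψ2).2 ⟨hψ2surj, by rw [hT2, hZccard]⟩
  have hf5bij : Function.Bijective f5 :=
    (Nat.bijective_iff_surjective_and_card f5).2 ⟨hf5surj, by rw [hT5, hA0card]⟩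
  -- key injectivity consequences
  have hZdvd : ∀ M : ℕ, (π z) ^ M = 1 → p ∣ M := by
    intro M hM
    have he : ψ2 ((M : ZMod p), 0) = ψ2 (0, 0) := by
      apply Subtype.ext
      show (π z) ^ ((M : ZMod p)).val * (π α) ^ (0 : ZMod p).val
          = (π z) ^ (0 : ZMod p).val * (π α) ^ (0 : ZMod p).val
      rw [ZMod.val_zero, pow_zero, pow_zero, mul_one, mul_one, ZMod.val_natCast,
        ← ppow_mod hZp', hM]
    have he2 : ((M : ZMod p), (0 : ZMod p)) = ((0 : ZMod p), (0 : ZMod p)) := hψ2bij.1 he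
    have he3 : (M : ZMod p) = 0 := congrArg Prod.fst he2
    exact (ZMod.natCast_eq_zero_iff M p).1 he3
  have ha13 : ∀ K L : ℕ, a₁ ^ K * a₃ ^ L = 1 → p ∣ K ∧ p ∣ L := by
    intro K L hKL
    have he : f5 (0, (K : ZMod p), 0, (L : ZMod p), 0) = f5 (0, 0, 0, 0, 0) := by
      apply Subtype.ext
      show (α^p)^(0 : ZMod p).val * (a₁^((K : ZMod p)).val * (a₂^(0 : ZMod p).val *
            (a₃^((L : ZMod p)).val * a₄^(0 : ZMod p).val)))
          = (α^p)^(0 : ZMod p).val * (a₁^(0 : ZMod p).val * (a₂^(0 : ZMod p).val *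
            (a₃^(0 : ZMod p).val * a₄^(0 : ZMod p).val)))
      simp only [ZMod.val_zero, pow_zero, one_mul, mul_one]
      rw [ZMod.val_natCast, ZMod.val_natCast, ← ppow_mod h1p, ← ppow_mod h3p]
      exact hKL
    have he2 := hf5bij.1 he
    constructor
    · have : (K : ZMod p) = 0 := congrArg (fun t => t.2.1) he2
      exact (ZMod.natCast_eq_zero_iff K p).1 this
    · have : (L : ZMod p) = 0 := congrArg (fun t => t.2.2.2.1) he2
      exact (ZMod.natCast_eq_zero_iff L p).1 this
  -- commutation formulas
  have hax : ∀ n : ℕ, (π x) ^ n * (π y) = (π y) * (π x) ^ n * (π z) ^ n := aux_comm hq hZX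
  have hq' : (π y) * (π x) = (π x) * (π y) * (π z) ^ (p - 1) := by
    have hZinv : (π z) ^ (p - 1) = (π z)⁻¹ := by
      have h' := ppow_inv ppos hZp' 1
      simpa using h'.symm
    rw [hZinv, hq, mul_inv_cancel_right]
  have hay : ∀ n : ℕ, (π y) ^ n * (π x) = (π x) * (π y) ^ n * ((π z) ^ (p-1)) ^ n :=
    aux_comm hq' (Commute.pow_left (hZY : Commute (π z) (π y)) (p-1))
  -- ===== the center is contained in A0 =====
  have hcenter_le : center W ≤ A0 := by
    intro g hg
    obtain ⟨I0, J0, hIJ⟩ := decQ2 (σ g)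
    have hv : ((π x) ^ I0 * (π y) ^ J0)⁻¹ * (π g) ∈ Zc := by
      refine (QuotientGroup.eq_one_iff _).1 ?_
      rw [← QuotientGroup.mk'_apply, ← hρdef, map_mul, map_inv, map_mul, map_pow, map_pow]
      rw [show ρ (π x) = σ x from rfl, show ρ (π y) = σ y from rfl,
        show ρ (π g) = σ g from rfl, ← hIJ]
      exact inv_mul_cancel _
    obtain ⟨k, l, hvd⟩ := decZc _ hv
    have hπg : π g = (π x) ^ I0 * ((π y) ^ J0 * ((π z) ^ k.val * (π α) ^ l.val)) := by
      calc π g = ((π x) ^ I0 * (π y) ^ J0) * (((π x) ^ I0 * (π y) ^ J0)⁻¹ * π g) := by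
            rw [mul_inv_cancel_left]
      _ = (π x) ^ I0 * ((π y) ^ J0 * ((π z) ^ k.val * (π α) ^ l.val)) := by
            rw [hvd, mul_assoc]
    have hw0 : (π z) ^ k.val * (π α) ^ l.val ∈ center (W ⧸ A0) :=
      hZcle (mul_mem (pow_mem hZZc _) (pow_mem hAZc _))
    have w0c := Subgroup.mem_center_iff.1 hw0
    have hgy : π g * π y = π y * π g := by
      have h0 : π (y * g) = π (g * y) := congrArg π (Subgroup.mem_center_iff.1 hg y)
      rw [map_mul, map_mul] at h0
      exact h0.symm
    have hgx : π g * π x = π x * π g := by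
      have h0 : π (x * g) = π (g * x) := congrArg π (Subgroup.mem_center_iff.1 hg x)
      rw [map_mul, map_mul] at h0
      exact h0.symm
    -- from commuting with y : (π z)^I0 = 1
    have hZI : (π z) ^ I0 = 1 := by
      have hs : ((π y) ^ J0 * ((π z) ^ k.val * (π α) ^ l.val)) * π y
          = π y * ((π y) ^ J0 * ((π z) ^ k.val * (π α) ^ l.val)) := by
        calc ((π y) ^ J0 * ((π z) ^ k.val * (π α) ^ l.val)) * π y
            = (π y) ^ J0 * (((π z) ^ k.val * (π α) ^ l.val) * π y) := by rw [mul_assoc]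
        _ = (π y) ^ J0 * (π y * ((π z) ^ k.val * (π α) ^ l.val)) := by rw [← w0c (π y)]
        _ = ((π y) ^ J0 * π y) * ((π z) ^ k.val * (π α) ^ l.val) := by rw [mul_assoc]
        _ = (π y * (π y) ^ J0) * ((π z) ^ k.val * (π α) ^ l.val) := by rw [pow_mul_comm']
        _ = π y * ((π y) ^ J0 * ((π z) ^ k.val * (π α) ^ l.val)) := by rw [mul_assoc]
      have lhs_eq : π g * π y
          = π y * ((π x) ^ I0 * ((π z) ^ I0 * ((π y) ^ J0 * ((π z) ^ k.val * (π α) ^ l.val)))) := by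
        rw [hπg]
        calc (π x) ^ I0 * ((π y) ^ J0 * ((π z) ^ k.val * (π α) ^ l.val)) * π y
            = (π x) ^ I0 * (((π y) ^ J0 * ((π z) ^ k.val * (π α) ^ l.val)) * π y) := by
              rw [mul_assoc]
        _ = (π x) ^ I0 * (π y * ((π y) ^ J0 * ((π z) ^ k.val * (π α) ^ l.val))) := by rw [hs]
        _ = ((π x) ^ I0 * π y) * ((π y) ^ J0 * ((π z) ^ k.val * (π α) ^ l.val)) := by
              rw [mul_assoc]
        _ = (π y * (π x) ^ I0 * (π z) ^ I0) * ((π y) ^ J0 * ((π z) ^ k.val * (π α) ^ l.val)) := by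
              rw [hax I0]
        _ = π y * ((π x) ^ I0 * ((π z) ^ I0 * ((π y) ^ J0 * ((π z) ^ k.val * (π α) ^ l.val)))) := by
              simp only [mul_assoc]
      have rhs_eq : π y * π g
          = π y * ((π x) ^ I0 * ((π y) ^ J0 * ((π z) ^ k.val * (π α) ^ l.val))) := by rw [hπg]
      have heq := hgy
      rw [lhs_eq, rhs_eq] at heq
      have h2 := mul_left_cancel heq
      have h3 := mul_left_cancel h2
      exact mul_eq_right.1 h3
    -- from commuting with x : ((π z)^(p-1))^J0 = 1
    have hZJ : ((π z) ^ (p-1)) ^ J0 = 1 := by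
      have hs : ((π y) ^ J0 * ((π z) ^ k.val * (π α) ^ l.val)) * π x
          = (π x * ((π y) ^ J0 * ((π z) ^ (p-1)) ^ J0)) * ((π z) ^ k.val * (π α) ^ l.val) := by
        calc ((π y) ^ J0 * ((π z) ^ k.val * (π α) ^ l.val)) * π x
            = (π y) ^ J0 * (((π z) ^ k.val * (π α) ^ l.val) * π x) := by rw [mul_assoc]
        _ = (π y) ^ J0 * (π x * ((π z) ^ k.val * (π α) ^ l.val)) := by rw [← w0c (π x)]
        _ = ((π y) ^ J0 * π x) * ((π z) ^ k.val * (π α) ^ l.val) := by rw [mul_assoc]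
        _ = ((π x) * (π y) ^ J0 * ((π z) ^ (p-1)) ^ J0) * ((π z) ^ k.val * (π α) ^ l.val) := by
              rw [hay J0]
        _ = (π x * ((π y) ^ J0 * ((π z) ^ (p-1)) ^ J0)) * ((π z) ^ k.val * (π α) ^ l.val) := by
              rw [mul_assoc (π x)]
      have lhs_eq : π g * π x
          = (π x) ^ I0 * (π x * ((π y) ^ J0 * (((π z) ^ (p-1)) ^ J0 *
              ((π z) ^ k.val * (π α) ^ l.val)))) := by
        rw [hπg]
        calc (π x) ^ I0 * ((π y) ^ J0 * ((π z) ^ k.val * (π α) ^ l.val)) * π x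
            = (π x) ^ I0 * (((π y) ^ J0 * ((π z) ^ k.val * (π α) ^ l.val)) * π x) := by
              rw [mul_assoc]
        _ = (π x) ^ I0 * ((π x * ((π y) ^ J0 * ((π z) ^ (p-1)) ^ J0)) *
              ((π z) ^ k.val * (π α) ^ l.val)) := by rw [hs]
        _ = (π x) ^ I0 * (π x * ((π y) ^ J0 * (((π z) ^ (p-1)) ^ J0 *
              ((π z) ^ k.val * (π α) ^ l.val)))) := by simp only [mul_assoc]
      have rhs_eq : π x * π g
          = (π x) ^ I0 * (π x * ((π y) ^ J0 * ((π z) ^ k.val * (π α) ^ l.val))) := by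
        rw [hπg, ← mul_assoc, ← pow_mul_comm', mul_assoc]
      have heq := hgx
      rw [lhs_eq, rhs_eq] at heq
      have h2 := mul_left_cancel heq
      have h3 := mul_left_cancel h2
      have h4 := mul_left_cancel h3
      exact mul_eq_right.1 h4
    have hpI : p ∣ I0 := hZdvd I0 hZI
    have hpJ : p ∣ J0 := by
      have hz2 : (π z) ^ ((p-1) * J0) = 1 := by rw [pow_mul]; exact hZJ
      have hd := hZdvd _ hz2
      have p2 := hp.two_le
      have hco : Nat.Coprime p (p - 1) := by
        refine (Nat.Prime.coprime_iff_not_dvd hp).2 ?_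
        intro hdd
        have := Nat.le_of_dvd (by omega) hdd
        omega
      exact hco.dvd_of_dvd_mul_left hd
    have hXI : (π x) ^ I0 = 1 := by
      obtain ⟨c, rfl⟩ := hpI
      rw [pow_mul, hXp', one_pow]
    have hYJ : (π y) ^ J0 = 1 := by
      obtain ⟨c, rfl⟩ := hpJ
      rw [pow_mul, hYp', one_pow]
    have hπg2 : π g = (π z) ^ k.val * (π α) ^ l.val := by
      rw [hπg, hXI, hYJ, one_mul, one_mul]
    -- back in W
    have hπu : π (z ^ k.val * α ^ l.val) = (π z) ^ k.val * (π α) ^ l.val := by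
      rw [map_mul, map_pow, map_pow]
    have hwA0 : (z ^ k.val * α ^ l.val)⁻¹ * g ∈ A0 := by
      refine (QuotientGroup.eq_one_iff _).1 ?_
      rw [← QuotientGroup.mk'_apply, ← hπdef, map_mul, map_inv, hπu, ← hπg2]
      exact inv_mul_cancel _
    have hcentw : (z ^ k.val * α ^ l.val)⁻¹ * g ∈ center W := hA0le hwA0
    have hu_cent : z ^ k.val * α ^ l.val ∈ center W := by
      have he : z ^ k.val * α ^ l.val = g * ((z ^ k.val * α ^ l.val)⁻¹ * g)⁻¹ := by group
      rw [he]; exact mul_mem hg (inv_mem hcentw)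
    have e0 : x⁻¹ * (z ^ k.val * α ^ l.val) * x = z ^ k.val * α ^ l.val :=
      conj_central_right hu_cent x
    have e1 : x⁻¹ * (z ^ k.val * α ^ l.val) * x
        = (x⁻¹ * z ^ k.val * x) * (x⁻¹ * α ^ l.val * x) := by simp [mul_assoc]
    have e2 : x⁻¹ * z ^ k.val * x = z ^ k.val * (a₁⁻¹) ^ k.val := by
      rw [conj_pow_aux, hxz,
        Commute.mul_pow (Commute.inv_right (Subgroup.mem_center_iff.1 hc1 z : Commute z a₁))]
    have e3 : x⁻¹ * α ^ l.val * x = α ^ l.val * (a₃⁻¹) ^ l.val := by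
      rw [conj_pow_aux, hxa,
        Commute.mul_pow (Commute.inv_right (Subgroup.mem_center_iff.1 hc3 α : Commute α a₃))]
    have e4 : z ^ k.val * α ^ l.val
        = z ^ k.val * α ^ l.val * ((a₁⁻¹) ^ k.val * (a₃⁻¹) ^ l.val) := by
      conv_lhs => rw [← e0, e1, e2, e3]
      have hsw : (a₁⁻¹) ^ k.val * α ^ l.val = α ^ l.val * (a₁⁻¹) ^ k.val :=
        (Subgroup.mem_center_iff.1 (pow_mem (inv_mem hc1) k.val) (α ^ l.val)).symm
      calc z ^ k.val * (a₁⁻¹) ^ k.val * (α ^ l.val * (a₃⁻¹) ^ l.val)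
          = z ^ k.val * (((a₁⁻¹) ^ k.val * α ^ l.val) * (a₃⁻¹) ^ l.val) := by
            simp only [mul_assoc]
      _ = z ^ k.val * ((α ^ l.val * (a₁⁻¹) ^ k.val) * (a₃⁻¹) ^ l.val) := by rw [hsw]
      _ = z ^ k.val * α ^ l.val * ((a₁⁻¹) ^ k.val * (a₃⁻¹) ^ l.val) := by
            simp only [mul_assoc]
    have e5 : (a₁⁻¹) ^ k.val * (a₃⁻¹) ^ l.val = 1 := left_eq_mul.1 e4
    have e6 : a₁ ^ k.val * a₃ ^ l.val = 1 := by
      have e5' : (a₁ ^ k.val)⁻¹ * (a₃ ^ l.val)⁻¹ = 1 := by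
        rw [← inv_pow, ← inv_pow]; exact e5
      have e7 : a₃ ^ l.val * a₁ ^ k.val = 1 := by
        have := congrArg (fun t => t⁻¹) e5'
        simpa [mul_inv_rev] using this
      rw [show a₁ ^ k.val * a₃ ^ l.val = a₃ ^ l.val * a₁ ^ k.val from
        Subgroup.mem_center_iff.1 (pow_mem hc3 l.val) (a₁ ^ k.val)]
      exact e7
    obtain ⟨hdK, hdL⟩ := ha13 _ _ e6
    have hK0 : k.val = 0 := Nat.eq_zero_of_dvd_of_lt hdK (ZMod.val_lt k)
    have hL0 : l.val = 0 := Nat.eq_zero_of_dvd_of_lt hdL (ZMod.val_lt l)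
    have hfin : π g = 1 := by rw [hπg2, hK0, hL0, pow_zero, pow_zero, mul_one]
    refine (QuotientGroup.eq_one_iff g).1 ?_
    rw [← QuotientGroup.mk'_apply, ← hπdef]
    exact hfin
  exact ⟨hpart1, le_antisymm hcenter_le hA0le⟩
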